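/- Fix ρ ∈ (0,1), λ > 0, C ≥ 1 and M, Δ > 0. There exist constants β ∈ (0,1), b > 0 and λ₁ > 0, depending only on M, Δ, λ and C, such that the following holds: for every Borel probability measure Γ on ℝ^d with ∫ exp(λ‖X‖) dΓ(X) ≤ C and every measurable allocation function g: ℝ^d × ℝ^d → [0,1] satisfying the (M,Δ)-negative feedback condition, one has for all Λ ∈ W_Γ: ∫ [ g(Λ,X)·exp(λ₁‖Λ + (1−ρ)X‖) + (1−g(Λ,X))·exp(λ₁‖Λ − ρX‖) ] dΓ(X) ≤ β·exp(λ₁‖Λ‖) + b. Moreover, writing V(Λ) = exp(λ₁‖Λ‖), for every α ∈ (0,1] there exists β_α ∈ (0,1) (which can be chosen continuous in α with β_α → 1 as α → 0) such that ∫ [ g(Λ,X)·V^α(Λ + (1−ρ)X) + (1−g(Λ,X))·V^α(Λ − ρX) ] dΓ(X) ≤ β_α·V^α(Λ) + b for all Λ ∈ W_Γ. -/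

import Mathlib

set_option maxHeartbeats 4000000


open MeasureTheory ProbabilityTheory Filter Set
open scoped ENNReal RealInnerProductSpace

noncomputable section

/-- `ℝ^d` with the Euclidean norm. -/
abbrev Ed (d : ℕ) : Type := EuclideanSpace ℝ (Fin d)

/-- Action of the CAR transition kernel `P_g` on a function `h`:
`(P_g h)(Λ) = ∫ [ g(Λ,X)·h(Λ + (1−ρ)X) + (1−g(Λ,X))·h(Λ − ρX) ] dΓ(X)`. -/
def kernelOp (d : ℕ) (ρ : ℝ) (Γ : Measure (Ed d)) (g : Ed d → Ed d → ℝ)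
    (h : Ed d → ℝ) (Λ : Ed d) : ℝ :=
  ∫ X, g Λ X * h (Λ + (1 - ρ) • X) + (1 - g Λ X) * h (Λ - ρ • X) ∂Γ

/-- `W_Γ`: the linear span of the topological support of `Γ` (the set of points all of
whose open neighbourhoods have positive measure). -/
def suppSpan (d : ℕ) (Γ : Measure (Ed d)) : Submodule ℝ (Ed d) :=
  Submodule.span ℝ {x : Ed d | ∀ U : Set (Ed d), IsOpen U → x ∈ U → 0 < Γ U}

/-- The `(M,Δ)`-negative feedback condition for an allocation function `g`. -/
def NegFeedback (d : ℕ) (ρ M Δ : ℝ) (Γ : Measure (Ed d)) (g : Ed d → Ed d → ℝ) : Prop :=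
  ∀ Λ : Ed d, Λ ∈ suppSpan d Γ → M ≤ ‖Λ‖ →
    (∫ X, (g Λ X - ρ) * (⟪X, Λ⟫ / ‖Λ‖) ∂Γ) ≤ -Δ

/-- `Γ` is sub-exponential: `∫ exp(λ‖X‖) dΓ(X) < ∞` for some `λ > 0`. -/
def SubExp (d : ℕ) (Γ : Measure (Ed d)) : Prop :=
  ∃ l : ℝ, 0 < l ∧ Integrable (fun x => Real.exp (l * ‖x‖)) Γ

/-- Drift inequality for the CAR kernel under the negative feedback condition:
there are universal constants `β ∈ (0,1)`, `b > 0`, `λ₁ > 0` depending only on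
`M`, `Δ`, `λ` and `C` such that `P_g V ≤ β V + b` on `W_Γ` where `V = exp(λ₁‖·‖)`;
moreover for every `α ∈ (0,1]` one has `P_g V^α ≤ β_α V^α + b` with `β_α ∈ (0,1)`
continuous in `α` and `β_α → 1` as `α → 0`. -/
lemma expsq {x : ℝ} (h : |x| ≤ 1) : Real.exp x ≤ 1 + x + x^2 := by
  have := Real.exp_bound h (n := 2)
  simp [Finset.sum_range_succ] at this
  rw [abs_le] at this
  nlinarith [sq_abs x, abs_nonneg x]

lemma loglem (u : ℝ) (hu : 0 < u) : Real.log u ≤ 4 * Real.sqrt (Real.sqrt u) := by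
  have h1 : Real.log u = 4 * Real.log (Real.sqrt (Real.sqrt u)) := by
    rw [Real.log_sqrt (Real.sqrt_nonneg u), Real.log_sqrt hu.le]; ring
  have h2 : Real.log (Real.sqrt (Real.sqrt u)) ≤ Real.sqrt (Real.sqrt u) - 1 :=
    Real.log_le_sub_one_of_pos (Real.sqrt_pos.2 (Real.sqrt_pos.2 hu))
  nlinarith [Real.sqrt_nonneg (Real.sqrt u)]

lemma scalar_main {t Δ R n s q γ ρ N1 N2 : ℝ}
    (hρ1 : 0 < ρ) (hρ2 : ρ < 1) (hγ : γ ∈ Set.Icc (0:ℝ) 1)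
    (ht : 0 < t) (hΔ : 0 < Δ)
    (hs : |s| ≤ R)
    (hq1 : 0 ≤ q) (hq2 : q ≤ Δ/8) (hΔR : Δ/4 ≤ R)
    (htR : t*R ≤ 2/9) (htR2 : t*R^2 ≤ Δ/18)
    (hN1 : N1 ≤ n + ((1-ρ)*s + q)) (hN2 : N2 ≤ n + (-ρ*s + q)) :
    γ * Real.exp (t*N1) + (1-γ) * Real.exp (t*N2)
      ≤ Real.exp (t*n) * (1 + t*Δ/4 + t*((γ-ρ)*s)) := by
  obtain ⟨hγ0, hγ1⟩ := hγ
  obtain ⟨hs1, hs2⟩ := abs_le.mp hs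
  have hR : 0 < R := lt_of_lt_of_le (by positivity) hΔR
  set A : ℝ := (1-ρ)*s + q with hA_def
  set B : ℝ := -ρ*s + q with hB_def
  have hA : |A| ≤ 3*R/2 := by
    rw [abs_le]; constructor <;> nlinarith
  have hB : |B| ≤ 3*R/2 := by
    rw [abs_le]; constructor <;> nlinarith
  have htA : |t*A| ≤ 1 := by
    rw [abs_mul, abs_of_pos ht]
    obtain ⟨a1, a2⟩ := abs_le.mp hA
    nlinarith [abs_nonneg A]
  have htB : |t*B| ≤ 1 := by
    rw [abs_mul, abs_of_pos ht]
    obtain ⟨a1, a2⟩ := abs_le.mp hB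
    nlinarith [abs_nonneg B]
  have e1 : Real.exp (t*N1) ≤ Real.exp (t*n) * (1 + t*A + (t*A)^2) := by
    calc Real.exp (t*N1) ≤ Real.exp (t*(n+A)) := by
          exact Real.exp_le_exp.2 (mul_le_mul_of_nonneg_left (by linarith) ht.le)
      _ = Real.exp (t*n) * Real.exp (t*A) := by rw [← Real.exp_add]; ring_nf
      _ ≤ Real.exp (t*n) * (1 + t*A + (t*A)^2) :=
          mul_le_mul_of_nonneg_left (expsq htA) (Real.exp_pos _).le
  have e2 : Real.exp (t*N2) ≤ Real.exp (t*n) * (1 + t*B + (t*B)^2) := by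
    calc Real.exp (t*N2) ≤ Real.exp (t*(n+B)) := by
          exact Real.exp_le_exp.2 (mul_le_mul_of_nonneg_left (by linarith) ht.le)
      _ = Real.exp (t*n) * Real.exp (t*B) := by rw [← Real.exp_add]; ring_nf
      _ ≤ Real.exp (t*n) * (1 + t*B + (t*B)^2) :=
          mul_le_mul_of_nonneg_left (expsq htB) (Real.exp_pos _).le
  have hA2 : A^2 ≤ 9*R^2/4 := by
    obtain ⟨a1, a2⟩ := abs_le.mp hA; nlinarith
  have hB2 : B^2 ≤ 9*R^2/4 := by
    obtain ⟨a1, a2⟩ := abs_le.mp hB; nlinarith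
  have c1 : t^2*(γ*A^2 + (1-γ)*B^2) ≤ t^2*(9*R^2/4) := by nlinarith [mul_nonneg (mul_nonneg (sq_nonneg t) hγ0) (sub_nonneg.2 hA2), mul_nonneg (mul_nonneg (sq_nonneg t) (by linarith : (0:ℝ) ≤ 1-γ)) (sub_nonneg.2 hB2)]
  have c3 : (9/4)*t*(t*R^2) ≤ (9/4)*t*(Δ/18) := by nlinarith
  have c4 : t*q ≤ t*(Δ/8) := by nlinarith
  have expand : γ*(1+t*A+(t*A)^2) + (1-γ)*(1+t*B+(t*B)^2)
      = 1 + t*((γ-ρ)*s + q) + t^2*(γ*A^2+(1-γ)*B^2) := by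
    simp only [hA_def, hB_def]; ring
  have key : γ*(1+t*A+(t*A)^2) + (1-γ)*(1+t*B+(t*B)^2)
      ≤ 1 + t*Δ/4 + t*((γ-ρ)*s) := by
    rw [expand]
    have : t^2*(9*R^2/4) = (9/4)*t*(t*R^2) := by ring
    nlinarith
  calc γ * Real.exp (t*N1) + (1-γ) * Real.exp (t*N2)
      ≤ γ * (Real.exp (t*n) * (1 + t*A + (t*A)^2))
        + (1-γ) * (Real.exp (t*n) * (1 + t*B + (t*B)^2)) :=
        add_le_add (mul_le_mul_of_nonneg_left e1 hγ0)
          (mul_le_mul_of_nonneg_left e2 (by linarith))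
    _ = Real.exp (t*n) * (γ*(1+t*A+(t*A)^2) + (1-γ)*(1+t*B+(t*B)^2)) := by ring
    _ ≤ Real.exp (t*n) * (1 + t*Δ/4 + t*((γ-ρ)*s)) :=
        mul_le_mul_of_nonneg_left key (Real.exp_pos _).le


lemma normb {d : ℕ} (Λ X : Ed d) (u : ℝ) (hu : |u| ≤ 1) (hΛ : 0 < ‖Λ‖)
    (hX : ‖X‖ ≤ ‖Λ‖) :
    ‖Λ + u • X‖ ≤ ‖Λ‖ + u * (⟪X, Λ⟫ / ‖Λ‖) + ‖X‖^2 / (2 * ‖Λ‖) := by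
  set n := ‖Λ‖ with hn
  set i := (⟪X, Λ⟫ : ℝ) with hi
  have hsq : ‖Λ + u • X‖^2 = n^2 + 2*(u*i) + u^2*‖X‖^2 := by
    rw [@norm_add_sq_real, real_inner_smul_right, real_inner_comm, norm_smul,
      Real.norm_eq_abs, mul_pow, sq_abs]
  have hcs : |i| ≤ ‖X‖ * n := abs_real_inner_le_norm X Λ
  obtain ⟨hu1, hu2⟩ := abs_le.mp hu
  have hu2' : u^2 ≤ 1 := by nlinarith
  have hXnn : (0:ℝ) ≤ ‖X‖ := norm_nonneg _
  have habs : |u * (i/n)| ≤ ‖X‖ := by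
    calc |u * (i/n)| = |u| * (|i|/n) := by rw [abs_mul, abs_div, abs_of_pos hΛ]
      _ ≤ 1 * (‖X‖*n/n) := by gcongr
      _ = ‖X‖ := by field_simp
  obtain ⟨ha1, ha2⟩ := abs_le.mp habs
  have hRHS : 0 ≤ n + u * (i / n) + ‖X‖^2 / (2*n) := by
    have : 0 ≤ ‖X‖^2 / (2*n) := by positivity
    linarith
  have hb2 : ‖Λ + u • X‖^2 ≤ (n + u * (i / n) + ‖X‖^2 / (2*n))^2 := by
    rw [hsq]
    have e1 : u * (i/n) * n = u * i := by field_simp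
    have e2 : ‖X‖^2 / (2*n) * (2*n) = ‖X‖^2 := by field_simp
    nlinarith [sq_nonneg (u * (i/n) + ‖X‖^2/(2*n))]
  nlinarith [norm_nonneg (Λ + u • X)]



section core
variable {d : ℕ} {ρ lam C M Δ lam1 t b R : ℝ}

theorem core (hρ1 : 0 < ρ) (hρ2 : ρ < 1) (hlam : 0 < lam) (hC : 1 ≤ C)
    (hM : 0 < M) (hΔ : 0 < Δ)
    (hl0 : 0 < lam1) (hl1 : lam1 ≤ lam/2) (hl2 : lam1 * Δ ≤ 1)
    (ht0 : 0 < t) (ht1 : t ≤ lam1)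
    (hR1 : Δ/4 ≤ R) (hR2 : t * R^2 ≤ Δ/18)
    (hR3 : Real.exp (-(lam * R)/2) * (2*C) ≤ t*Δ/4)
    (hb : C * Real.exp (lam1*M+1) ≤ b)
    (Γ : Measure (Ed d)) (hP : IsProbabilityMeasure Γ)
    (hint : Integrable (fun x => Real.exp (lam*‖x‖)) Γ)
    (hintC : (∫ x, Real.exp (lam*‖x‖) ∂Γ) ≤ C)
    (g : Ed d → Ed d → ℝ) (hgm : Measurable (Function.uncurry g))
    (hg01 : ∀ Λ X, g Λ X ∈ Set.Icc (0:ℝ) 1)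
    (hNF : NegFeedback d ρ M Δ Γ g)
    (Λ : Ed d) (hΛ : Λ ∈ suppSpan d Γ) :
    (∫⁻ X, ENNReal.ofReal (g Λ X * Real.exp (t*‖Λ + (1-ρ)•X‖)
        + (1 - g Λ X) * Real.exp (t*‖Λ - ρ•X‖)) ∂Γ)
      ≤ ENNReal.ofReal ((1 - t*Δ/2) * Real.exp (t*‖Λ‖) + b) := by
  have hR : 0 < R := lt_of_lt_of_le (by positivity) hR1
  have htlam : t ≤ lam := by linarith
  have htR : t * R ≤ 2/9 := by nlinarith [mul_nonneg ht0.le (sub_nonneg.2 hR1)]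
  set n : ℝ := ‖Λ‖ with hn
  have hn0 : 0 ≤ n := norm_nonneg _
  set F : Ed d → ℝ := fun x => g Λ x * Real.exp (t*‖Λ + (1-ρ)•x‖)
        + (1 - g Λ x) * Real.exp (t*‖Λ - ρ•x‖) with hF_def
  -- measurability of g Λ ·
  have hgΛ : Measurable (g Λ) := hgm.comp measurable_prodMk_left
  have hFm : Measurable F := by
    have c1 : Continuous fun x : Ed d => Real.exp (t*‖Λ + (1-ρ)•x‖) := by fun_prop
    have c2 : Continuous fun x : Ed d => Real.exp (t*‖Λ - ρ•x‖) := by fun_prop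
    exact (hgΛ.mul c1.measurable).add ((measurable_const.sub hgΛ).mul c2.measurable)
  have hF0 : ∀ x, 0 ≤ F x := by
    intro x
    obtain ⟨h0, h1⟩ := hg01 Λ x
    have e1 := (Real.exp_pos (t*‖Λ + (1-ρ)•x‖)).le
    have e2 := (Real.exp_pos (t*‖Λ - ρ•x‖)).le
    have : 0 ≤ 1 - g Λ x := by linarith
    positivity
  have hFle : ∀ x, F x ≤ Real.exp (t*n) * Real.exp (lam*‖x‖) := by
    intro x
    obtain ⟨h0, h1⟩ := hg01 Λ x
    have b1 : ‖Λ + (1-ρ)•x‖ ≤ n + ‖x‖ := by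
      calc ‖Λ + (1-ρ)•x‖ ≤ ‖Λ‖ + ‖(1-ρ)•x‖ := norm_add_le _ _
        _ ≤ n + ‖x‖ := by
            rw [norm_smul, Real.norm_eq_abs, abs_of_pos (by linarith)]
            have := norm_nonneg x; nlinarith
    have b2 : ‖Λ - ρ•x‖ ≤ n + ‖x‖ := by
      calc ‖Λ - ρ•x‖ ≤ ‖Λ‖ + ‖ρ•x‖ := norm_sub_le _ _
        _ ≤ n + ‖x‖ := by
            rw [norm_smul, Real.norm_eq_abs, abs_of_pos hρ1]
            have := norm_nonneg x; nlinarith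
    have e1 : Real.exp (t*‖Λ + (1-ρ)•x‖) ≤ Real.exp (t*n) * Real.exp (lam*‖x‖) := by
      rw [← Real.exp_add]
      apply Real.exp_le_exp.2
      have := norm_nonneg x
      nlinarith
    have e2 : Real.exp (t*‖Λ - ρ•x‖) ≤ Real.exp (t*n) * Real.exp (lam*‖x‖) := by
      rw [← Real.exp_add]
      apply Real.exp_le_exp.2
      have := norm_nonneg x
      nlinarith
    calc F x ≤ g Λ x * (Real.exp (t*n) * Real.exp (lam*‖x‖))
        + (1 - g Λ x) * (Real.exp (t*n) * Real.exp (lam*‖x‖)) :=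
          add_le_add (mul_le_mul_of_nonneg_left e1 h0)
            (mul_le_mul_of_nonneg_left e2 (by linarith))
      _ = Real.exp (t*n) * Real.exp (lam*‖x‖) := by ring
  have hD_int : Integrable (fun x => Real.exp (t*n) * Real.exp (lam*‖x‖)) Γ :=
    hint.const_mul _
  have hF_int : Integrable F Γ := by
    apply hD_int.mono' hFm.aestronglyMeasurable
    filter_upwards with x
    rw [Real.norm_eq_abs, abs_of_nonneg (hF0 x)]
    exact hFle x
  rw [← MeasureTheory.ofReal_integral_eq_lintegral_ofReal hF_int (ae_of_all _ hF0)]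
  apply ENNReal.ofReal_le_ofReal
  -- real goal
  have hb0 : 0 < b := lt_of_lt_of_le (by positivity) hb
  have hβ0 : 0 ≤ 1 - t*Δ/2 := by nlinarith
  rcases lt_or_ge n (max M (4*R^2/Δ)) with hsmall | hbig
  · -- small region
    have h1 : ∫ x, F x ∂Γ ≤ ∫ x, Real.exp (t*n) * Real.exp (lam*‖x‖) ∂Γ :=
      integral_mono hF_int hD_int hFle
    rw [integral_const_mul] at h1
    have h2 : Real.exp (t*n) * ∫ x, Real.exp (lam*‖x‖) ∂Γ ≤ Real.exp (t*n) * C :=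
      mul_le_mul_of_nonneg_left hintC (Real.exp_pos _).le
    have h4R : t*(4*R^2/Δ) ≤ 2/9 := by
      have e : t*(4*R^2/Δ) = 4*(t*R^2)/Δ := by ring
      rw [e, div_le_iff₀ hΔ]
      nlinarith
    have htn : t*n ≤ lam1*M + 1 := by
      have h3 : t*n ≤ t*(max M (4*R^2/Δ)) :=
        mul_le_mul_of_nonneg_left hsmall.le ht0.le
      rcases max_cases M (4*R^2/Δ) with ⟨he, _⟩ | ⟨he, _⟩ <;> rw [he] at h3
      · nlinarith [mul_le_mul_of_nonneg_right ht1 hM.le]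
      · nlinarith [mul_nonneg hl0.le hM.le]
    have h5 : Real.exp (t*n) * C ≤ b := by
      calc Real.exp (t*n) * C ≤ Real.exp (lam1*M+1) * C :=
            mul_le_mul_of_nonneg_right (Real.exp_le_exp.2 htn) (by linarith)
        _ = C * Real.exp (lam1*M+1) := mul_comm _ _
        _ ≤ b := hb
    have h6 : 0 ≤ (1 - t*Δ/2) * Real.exp (t*n) :=
      mul_nonneg hβ0 (Real.exp_pos _).le
    linarith
  · -- large region
    have hnM : M ≤ n := le_trans (le_max_left _ _) hbig
    have hn_pos : 0 < n := lt_of_lt_of_le hM hnM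
    have hn4R : 4*R^2/Δ ≤ n := le_trans (le_max_right _ _) hbig
    have hR4R : R ≤ 4*R^2/Δ := by rw [le_div_iff₀ hΔ]; nlinarith
    have hnR : R ≤ n := le_trans hR4R hn4R
    set sfun : Ed d → ℝ := fun x => (⟪x, Λ⟫ : ℝ) / n with hsfun_def
    have hs_meas : Measurable sfun :=
      ((continuous_id.inner continuous_const).measurable).div_const n
    have hs_le : ∀ x, |sfun x| ≤ ‖x‖ := by
      intro x
      have hcs : |(⟪x,Λ⟫ : ℝ)| ≤ ‖x‖ * n := abs_real_inner_le_norm x Λ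
      rw [hsfun_def]
      simp only []
      rw [abs_div, abs_of_pos hn_pos, div_le_iff₀ hn_pos]
      exact hcs
    have habs_lin : ∀ x, |(g Λ x - ρ) * sfun x| ≤ ‖x‖ := by
      intro x
      obtain ⟨h0, h1⟩ := hg01 Λ x
      rw [abs_mul]
      calc |g Λ x - ρ| * |sfun x| ≤ 1 * ‖x‖ :=
            mul_le_mul (abs_le.2 ⟨by linarith, by linarith⟩) (hs_le x)
              (abs_nonneg _) zero_le_one
        _ = ‖x‖ := one_mul _
    set indf : Ed d → ℝ :=
      Set.indicator {x : Ed d | R < ‖x‖} (fun x => 2*Real.exp (lam1*‖x‖)) with hindf_def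
    set G : Ed d → ℝ :=
      fun x => (1 + t*Δ/4) + (t*((g Λ x - ρ) * sfun x) + indf x) with hG_def
    have hFG : ∀ x, F x ≤ Real.exp (t*n) * G x := by
      intro x
      obtain ⟨h0, h1⟩ := hg01 Λ x
      rcases le_or_gt ‖x‖ R with hxR | hxR
      · have hind : indf x = 0 :=
          Set.indicator_of_notMem (by simp only [Set.mem_setOf_eq, not_lt]; exact hxR) _
        have hq2 : ‖x‖^2/(2*n) ≤ Δ/8 := by
          have hxsq : ‖x‖^2 ≤ R^2 := by nlinarith [norm_nonneg x]
          have h4 : 4*R^2 ≤ n*Δ := by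
            have := (div_le_iff₀ hΔ).mp hn4R; linarith
          calc ‖x‖^2/(2*n) ≤ R^2/(2*n) := by gcongr
            _ ≤ Δ/8 := by rw [div_le_div_iff₀ (by positivity) (by norm_num)]; nlinarith
        have hb1 : ‖Λ + (1-ρ)•x‖ ≤ n + ((1-ρ)*sfun x + ‖x‖^2/(2*n)) := by
          have h := normb Λ x (1-ρ) (by rw [abs_of_pos (by linarith)]; linarith)
            hn_pos (le_trans hxR hnR)
          simp only [hsfun_def]
          linarith [h]
        have hb2 : ‖Λ - ρ•x‖ ≤ n + (-ρ*sfun x + ‖x‖^2/(2*n)) := by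
          have he : Λ - ρ•x = Λ + (-ρ)•x := by rw [neg_smul, ← sub_eq_add_neg]
          rw [he]
          have h := normb Λ x (-ρ) (by rw [abs_neg, abs_of_pos hρ1]; linarith)
            hn_pos (le_trans hxR hnR)
          simp only [hsfun_def]
          linarith [h]
        have main := scalar_main hρ1 hρ2 ⟨h0, h1⟩ ht0 hΔ
          (le_trans (hs_le x) hxR) (by positivity) hq2 hR1 htR hR2 hb1 hb2
        calc F x ≤ Real.exp (t*n) * (1 + t*Δ/4 + t*((g Λ x - ρ)*sfun x)) := main
          _ = Real.exp (t*n) * G x := by rw [hG_def]; simp only [hind]; ring_nf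
      · have hind : indf x = 2*Real.exp (lam1*‖x‖) :=
          Set.indicator_of_mem (by simpa using hxR) _
        have hFx : F x ≤ Real.exp (t*n) * Real.exp (lam1*‖x‖) := by
          have b1 : ‖Λ + (1-ρ)•x‖ ≤ n + ‖x‖ := by
            calc ‖Λ + (1-ρ)•x‖ ≤ ‖Λ‖ + ‖(1-ρ)•x‖ := norm_add_le _ _
              _ ≤ n + ‖x‖ := by
                  rw [norm_smul, Real.norm_eq_abs, abs_of_pos (by linarith)]
                  have := norm_nonneg x; nlinarith
          have b2 : ‖Λ - ρ•x‖ ≤ n + ‖x‖ := by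
            calc ‖Λ - ρ•x‖ ≤ ‖Λ‖ + ‖ρ•x‖ := norm_sub_le _ _
              _ ≤ n + ‖x‖ := by
                  rw [norm_smul, Real.norm_eq_abs, abs_of_pos hρ1]
                  have := norm_nonneg x; nlinarith
          have e1 : Real.exp (t*‖Λ + (1-ρ)•x‖) ≤ Real.exp (t*n) * Real.exp (lam1*‖x‖) := by
            rw [← Real.exp_add]
            apply Real.exp_le_exp.2
            have := norm_nonneg x; nlinarith
          have e2 : Real.exp (t*‖Λ - ρ•x‖) ≤ Real.exp (t*n) * Real.exp (lam1*‖x‖) := by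
            rw [← Real.exp_add]
            apply Real.exp_le_exp.2
            have := norm_nonneg x; nlinarith
          calc F x ≤ g Λ x * (Real.exp (t*n) * Real.exp (lam1*‖x‖))
              + (1 - g Λ x) * (Real.exp (t*n) * Real.exp (lam1*‖x‖)) :=
                add_le_add (mul_le_mul_of_nonneg_left e1 h0)
                  (mul_le_mul_of_nonneg_left e2 (by linarith))
            _ = Real.exp (t*n) * Real.exp (lam1*‖x‖) := by ring
        have hlow : -(Real.exp (lam1*‖x‖)) ≤ 1 + t*((g Λ x - ρ)*sfun x) := by
          have h2 := habs_lin x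
          have h3 := Real.add_one_le_exp (lam1*‖x‖)
          have h4 : t*‖x‖ ≤ lam1*‖x‖ := mul_le_mul_of_nonneg_right ht1 (norm_nonneg x)
          obtain ⟨hl, _⟩ := abs_le.mp h2
          nlinarith [mul_le_mul_of_nonneg_left hl ht0.le]
        have hGge : Real.exp (lam1*‖x‖) ≤ G x := by
          rw [hG_def]
          simp only [hind]
          have : 0 ≤ t*Δ/4 := by positivity
          linarith
        calc F x ≤ Real.exp (t*n) * Real.exp (lam1*‖x‖) := hFx
          _ ≤ Real.exp (t*n) * G x :=
              mul_le_mul_of_nonneg_left hGge (Real.exp_pos _).le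
    -- integrability of pieces
    have hnorm_int : Integrable (fun x : Ed d => ‖x‖) Γ := by
      apply (hint.const_mul (1/lam)).mono' continuous_norm.aestronglyMeasurable
      filter_upwards with x
      rw [Real.norm_eq_abs, abs_of_nonneg (norm_nonneg x)]
      have h3 := Real.add_one_le_exp (lam*‖x‖)
      rw [div_mul_eq_mul_div, le_div_iff₀ hlam, one_mul]
      nlinarith
    have hlin_meas : Measurable fun x => (g Λ x - ρ) * sfun x :=
      (hgΛ.sub measurable_const).mul hs_meas
    have hlin_int : Integrable (fun x => (g Λ x - ρ) * sfun x) Γ := by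
      apply hnorm_int.mono' hlin_meas.aestronglyMeasurable
      filter_upwards with x
      rw [Real.norm_eq_abs]
      exact habs_lin x
    have msR : MeasurableSet {x : Ed d | R < ‖x‖} :=
      measurableSet_lt measurable_const measurable_norm
    have hexp1_int : Integrable (fun x : Ed d => 2*Real.exp (lam1*‖x‖)) Γ := by
      have hm : AEStronglyMeasurable (fun x : Ed d => 2*Real.exp (lam1*‖x‖)) Γ :=
        (continuous_const.mul (Real.continuous_exp.comp
          (continuous_const.mul continuous_norm))).aestronglyMeasurable
      apply (hint.const_mul 2).mono' hm
      filter_upwards with x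
      rw [Real.norm_eq_abs, abs_of_nonneg (by positivity)]
      have : lam1*‖x‖ ≤ lam*‖x‖ := by
        have := norm_nonneg x; nlinarith
      have := Real.exp_le_exp.2 this
      linarith
    have hind_int : Integrable indf Γ := hexp1_int.indicator msR
    have hind_le : ∀ x, indf x ≤ Real.exp (-(lam*R)/2) * (2*Real.exp (lam*‖x‖)) := by
      intro x
      rcases le_or_gt ‖x‖ R with hxR | hxR
      · have hind : indf x = 0 :=
          Set.indicator_of_notMem (by simp only [Set.mem_setOf_eq, not_lt]; exact hxR) _
        rw [hind]; positivity
      · have hind : indf x = 2*Real.exp (lam1*‖x‖) :=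
          Set.indicator_of_mem (by simpa using hxR) _
        rw [hind]
        have key : lam1*‖x‖ ≤ -(lam*R)/2 + lam*‖x‖ := by
          have h1 : (lam - lam1)*‖x‖ ≥ (lam/2)*R := by
            have h2 : lam/2 ≤ lam - lam1 := by linarith
            have := norm_nonneg x
            nlinarith
          linarith [h1]
        calc 2*Real.exp (lam1*‖x‖) ≤ 2*Real.exp (-(lam*R)/2 + lam*‖x‖) := by
              have := Real.exp_le_exp.2 key; linarith
          _ = Real.exp (-(lam*R)/2) * (2*Real.exp (lam*‖x‖)) := by
              rw [Real.exp_add]; ring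
    have hdom_int : Integrable
        (fun x : Ed d => Real.exp (-(lam*R)/2) * (2*Real.exp (lam*‖x‖))) Γ :=
      (hint.const_mul 2).const_mul _
    have hind_bound : ∫ x, indf x ∂Γ ≤ t*Δ/4 := by
      calc ∫ x, indf x ∂Γ
          ≤ ∫ x, Real.exp (-(lam*R)/2) * (2*Real.exp (lam*‖x‖)) ∂Γ :=
            integral_mono hind_int hdom_int hind_le
        _ = Real.exp (-(lam*R)/2) * (2 * ∫ x, Real.exp (lam*‖x‖) ∂Γ) := by
            rw [integral_const_mul, integral_const_mul]
        _ ≤ Real.exp (-(lam*R)/2) * (2*C) := by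
            apply mul_le_mul_of_nonneg_left _ (Real.exp_pos _).le
            linarith
        _ ≤ t*Δ/4 := hR3
    have hG_int : Integrable G Γ :=
      (integrable_const _).add ((hlin_int.const_mul t).add hind_int)
    have hGc_int : Integrable (fun x => Real.exp (t*n) * G x) Γ :=
      hG_int.const_mul (Real.exp (t*n))
    have step1 : ∫ x, F x ∂Γ ≤ ∫ x, Real.exp (t*n) * G x ∂Γ :=
      integral_mono hF_int hGc_int hFG
    rw [integral_const_mul] at step1
    have e1 : ∫ x, G x ∂Γ = ∫ _x, ((1:ℝ) + t*Δ/4) ∂Γ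
        + ∫ x, (t*((g Λ x - ρ)*sfun x) + indf x) ∂Γ := by
      rw [hG_def]
      exact integral_add (integrable_const _) ((hlin_int.const_mul t).add hind_int)
    have e2 : ∫ x, (t*((g Λ x - ρ)*sfun x) + indf x) ∂Γ
        = ∫ x, t*((g Λ x - ρ)*sfun x) ∂Γ + ∫ x, indf x ∂Γ :=
      integral_add (hlin_int.const_mul t) hind_int
    have e3 : ∫ x, t*((g Λ x - ρ)*sfun x) ∂Γ = t * ∫ x, (g Λ x - ρ)*sfun x ∂Γ :=
      integral_const_mul _ _
    have e4 : ∫ _x, ((1:ℝ) + t*Δ/4) ∂Γ = 1 + t*Δ/4 := by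
      simp [measure_univ]
    have hGsplit : ∫ x, G x ∂Γ
        = (1 + t*Δ/4) + (t * (∫ x, (g Λ x - ρ) * sfun x ∂Γ) + ∫ x, indf x ∂Γ) := by
      rw [e1, e2, e3, e4]
    have hfeed : ∫ x, (g Λ x - ρ) * sfun x ∂Γ ≤ -Δ := by
      have := hNF Λ hΛ (by rw [← hn]; exact hnM)
      simpa [hsfun_def, hn] using this
    have hGle : ∫ x, G x ∂Γ ≤ 1 - t*Δ/2 := by
      rw [hGsplit]
      have h5 : t * (∫ x, (g Λ x - ρ) * sfun x ∂Γ) ≤ t * (-Δ) :=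
        mul_le_mul_of_nonneg_left hfeed ht0.le
      have h6 : t * (-Δ) = -(t*Δ) := by ring
      linarith [hind_bound]
    calc ∫ x, F x ∂Γ ≤ Real.exp (t*n) * ∫ x, G x ∂Γ := step1
      _ ≤ Real.exp (t*n) * (1 - t*Δ/2) :=
          mul_le_mul_of_nonneg_left hGle (Real.exp_pos _).le
      _ = (1 - t*Δ/2) * Real.exp (t*n) := mul_comm _ _
      _ ≤ (1 - t*Δ/2) * Real.exp (t*n) + b := by linarith
end core

theorem stmt1 (ρ lam C M Δ : ℝ) (hρ : ρ ∈ Set.Ioo (0 : ℝ) 1)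
    (hlam : 0 < lam) (hC : 1 ≤ C) (hM : 0 < M) (hΔ : 0 < Δ) :
    ∃ β ∈ Set.Ioo (0 : ℝ) 1, ∃ b > (0 : ℝ), ∃ lam₁ > (0 : ℝ),
      (∀ (d : ℕ) (Γ : Measure (Ed d)), IsProbabilityMeasure Γ →
        Integrable (fun x => Real.exp (lam * ‖x‖)) Γ →
        (∫ x, Real.exp (lam * ‖x‖) ∂Γ) ≤ C →
        ∀ g : Ed d → Ed d → ℝ, Measurable (Function.uncurry g) →
          (∀ Λ X, g Λ X ∈ Set.Icc (0 : ℝ) 1) →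
          NegFeedback d ρ M Δ Γ g →
          ∀ Λ ∈ suppSpan d Γ,
            (∫⁻ X, ENNReal.ofReal
                (g Λ X * Real.exp (lam₁ * ‖Λ + (1 - ρ) • X‖) +
                  (1 - g Λ X) * Real.exp (lam₁ * ‖Λ - ρ • X‖)) ∂Γ)
              ≤ ENNReal.ofReal (β * Real.exp (lam₁ * ‖Λ‖) + b)) ∧
      ∃ βα : ℝ → ℝ, ContinuousOn βα (Set.Ioc 0 1) ∧
        Tendsto βα (nhdsWithin 0 (Set.Ioi 0)) (nhds 1) ∧
        ∀ α ∈ Set.Ioc (0 : ℝ) 1, βα α ∈ Set.Ioo (0 : ℝ) 1 ∧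
          ∀ (d : ℕ) (Γ : Measure (Ed d)), IsProbabilityMeasure Γ →
            Integrable (fun x => Real.exp (lam * ‖x‖)) Γ →
            (∫ x, Real.exp (lam * ‖x‖) ∂Γ) ≤ C →
            ∀ g : Ed d → Ed d → ℝ, Measurable (Function.uncurry g) →
              (∀ Λ X, g Λ X ∈ Set.Icc (0 : ℝ) 1) →
              NegFeedback d ρ M Δ Γ g →
              ∀ Λ ∈ suppSpan d Γ,
                (∫⁻ X, ENNReal.ofReal
                    (g Λ X * Real.exp (lam₁ * ‖Λ + (1 - ρ) • X‖) ^ α +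
                      (1 - g Λ X) * Real.exp (lam₁ * ‖Λ - ρ • X‖) ^ α) ∂Γ)
                  ≤ ENNReal.ofReal (βα α * Real.exp (lam₁ * ‖Λ‖) ^ α + b) := by
  obtain ⟨hρ1, hρ2⟩ := hρ
  have hC0 : 0 < C := by linarith
  set K : ℝ := 8*C/Δ with hK_def
  have hK0 : 0 < K := by positivity
  set lam₁ : ℝ := min (lam/2) (min (1/Δ)
      (min (K * Real.exp (-(lam*Δ/8))) ((lam^2*Δ/1152)^2 / K))) with hlam₁_def
  have hl0 : 0 < lam₁ := by
    apply lt_min (by positivity)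
    apply lt_min (by positivity)
    apply lt_min (by positivity) (by positivity)
  have hl1 : lam₁ ≤ lam/2 := min_le_left _ _
  have hl1' : lam₁ ≤ 1/Δ := le_trans (min_le_right _ _) (min_le_left _ _)
  have hl2 : lam₁ * Δ ≤ 1 := by
    rw [← le_div_iff₀ hΔ] at *
    exact hl1'
  have hKexp : lam₁ ≤ K * Real.exp (-(lam*Δ/8)) :=
    le_trans (min_le_right _ _) (le_trans (min_le_right _ _) (min_le_left _ _))
  have hKsq : lam₁ ≤ (lam^2*Δ/1152)^2 / K :=
    le_trans (min_le_right _ _) (le_trans (min_le_right _ _) (min_le_right _ _))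
  -- R function and its properties
  have hRprop : ∀ t : ℝ, 0 < t → t ≤ lam₁ →
      Δ/4 ≤ 2/lam * Real.log (8*C/(t*Δ)) ∧
      t * (2/lam * Real.log (8*C/(t*Δ)))^2 ≤ Δ/18 ∧
      Real.exp (-(lam * (2/lam * Real.log (8*C/(t*Δ))))/2) * (2*C) ≤ t*Δ/4 := by
    intro t ht0 ht1
    have hKt_eq : 8*C/(t*Δ) = K/t := by rw [hK_def]; field_simp
    have hKt0 : 0 < K/t := by positivity
    have hlog_lb : lam*Δ/8 ≤ Real.log (K/t) := by
      rw [Real.le_log_iff_exp_le hKt0]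
      rw [le_div_iff₀ ht0]
      calc Real.exp (lam*Δ/8) * t ≤ Real.exp (lam*Δ/8) * (K * Real.exp (-(lam*Δ/8))) := by
            apply mul_le_mul_of_nonneg_left (le_trans ht1 hKexp) (Real.exp_pos _).le
        _ = K * (Real.exp (lam*Δ/8) * Real.exp (-(lam*Δ/8))) := by ring
        _ = K := by rw [← Real.exp_add]; simp
    have hlog0 : 0 ≤ Real.log (K/t) := le_trans (by positivity) hlog_lb
    refine ⟨?_, ?_, ?_⟩
    · rw [hKt_eq]
      calc Δ/4 = 2/lam * (lam*Δ/8) := by field_simp; ring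
        _ ≤ 2/lam * Real.log (K/t) := by
            apply mul_le_mul_of_nonneg_left hlog_lb (by positivity)
    · rw [hKt_eq]
      have hlog_ub : Real.log (K/t) ≤ 4 * Real.sqrt (Real.sqrt (K/t)) := loglem _ hKt0
      have hsq : (Real.log (K/t))^2 ≤ 16 * Real.sqrt (K/t) := by
        have h1 : Real.sqrt (Real.sqrt (K/t)) ^ 2 = Real.sqrt (K/t) :=
          Real.sq_sqrt (Real.sqrt_nonneg _)
        nlinarith [Real.sqrt_nonneg (Real.sqrt (K/t)), Real.sqrt_nonneg (K/t)]
      have h2 : t * (Real.log (K/t))^2 ≤ 16 * (t * Real.sqrt (K/t)) := by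
        nlinarith [mul_le_mul_of_nonneg_left hsq ht0.le]
      have e1 : t * Real.sqrt (K/t) = Real.sqrt (t*K) := by
        rw [Real.sqrt_div hK0.le, Real.sqrt_mul ht0.le]
        calc t * (Real.sqrt K / Real.sqrt t) = (t / Real.sqrt t) * Real.sqrt K := by ring
          _ = Real.sqrt t * Real.sqrt K := by rw [Real.div_sqrt]
      have e3 : lam₁*K ≤ (lam^2*Δ/1152)^2 := by rw [← le_div_iff₀ hK0]; exact hKsq
      have e4 : Real.sqrt (t*K) ≤ lam^2*Δ/1152 := by
        calc Real.sqrt (t*K) ≤ Real.sqrt ((lam^2*Δ/1152)^2) :=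
              Real.sqrt_le_sqrt (by nlinarith)
          _ = lam^2*Δ/1152 := Real.sqrt_sq (by positivity)
      have hts : t * Real.sqrt (K/t) ≤ lam^2*Δ/1152 := by rw [e1]; exact e4
      calc t * (2/lam * Real.log (K/t))^2 = (4/lam^2) * (t * (Real.log (K/t))^2) := by
            ring
        _ ≤ (4/lam^2) * (16*(t * Real.sqrt (K/t))) :=
            mul_le_mul_of_nonneg_left h2 (by positivity)
        _ ≤ (4/lam^2) * (16*(lam^2*Δ/1152)) := by
            have h16 : 16*(t * Real.sqrt (K/t)) ≤ 16*(lam^2*Δ/1152) := by linarith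
            exact mul_le_mul_of_nonneg_left h16 (by positivity)
        _ = Δ/18 := by field_simp; ring
    · rw [hKt_eq]
      have he : -(lam * (2/lam * Real.log (K/t)))/2 = -Real.log (K/t) := by
        field_simp
      rw [he, Real.exp_neg, Real.exp_log hKt0]
      have : (K/t)⁻¹ * (2*C) = t*Δ/4 := by
        rw [hK_def]
        field_simp
        ring
      exact le_of_eq this
  set b : ℝ := C * Real.exp (lam₁*M+1) with hb_def
  have hb0 : 0 < b := by positivity
  have hβ : (1 - lam₁*Δ/2) ∈ Set.Ioo (0:ℝ) 1 := by
    constructor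
    · nlinarith
    · nlinarith [mul_pos hl0 hΔ]
  refine ⟨1 - lam₁*Δ/2, hβ, b, hb0, lam₁, hl0, ?_, ?_⟩
  · intro d Γ hP hint hintC g hgm hg01 hNF Λ hΛ
    obtain ⟨hR1, hR2, hR3⟩ := hRprop lam₁ hl0 (le_refl _)
    exact core hρ1 hρ2 hlam hC hM hΔ hl0 hl1 hl2 hl0 (le_refl _)
      hR1 hR2 hR3 (le_refl b) Γ hP hint hintC g hgm hg01 hNF Λ hΛ
  · refine ⟨fun α => 1 - α*lam₁*Δ/2, ?_, ?_, ?_⟩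
    · have hc : Continuous (fun α : ℝ => 1 - α*lam₁*Δ/2) := by fun_prop
      exact hc.continuousOn
    · have hc : Continuous (fun α : ℝ => 1 - α*lam₁*Δ/2) := by fun_prop
      have hcont : Filter.Tendsto (fun α : ℝ => 1 - α*lam₁*Δ/2) (nhds 0) (nhds 1) := by
        have := hc.tendsto 0
        simpa using this
      exact hcont.mono_left nhdsWithin_le_nhds
    · intro α hα
      obtain ⟨hα0, hα1⟩ := hα
      have htα0 : 0 < α*lam₁ := mul_pos hα0 hl0
      have htα1 : α*lam₁ ≤ lam₁ := by nlinarith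
      constructor
      · constructor
        · have : α*lam₁*Δ ≤ lam₁*Δ := by nlinarith
          nlinarith
        · nlinarith [mul_pos htα0 hΔ]
      · intro d Γ hP hint hintC g hgm hg01 hNF Λ hΛ
        obtain ⟨hR1, hR2, hR3⟩ := hRprop (α*lam₁) htα0 htα1
        have hkey := core hρ1 hρ2 hlam hC hM hΔ hl0 hl1 hl2 htα0 htα1
          hR1 hR2 hR3 (le_refl b) Γ hP hint hintC g hgm hg01 hNF Λ hΛ
        have hfun : ∀ v : Ed d, Real.exp (lam₁ * ‖v‖) ^ α = Real.exp ((α*lam₁) * ‖v‖) := by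
          intro v
          rw [← Real.exp_mul]
          ring_nf
        simp only [hfun]
        exact hkey
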